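/- A real symmetric n×n matrix A (n ≥ 2) satisfies: A has nullity 1 and some kernel vector of A has all entries nonzero, if and only if det(A) = 0 and the adjugate adj(A) has no zero entries. -/

import Mathlib

open Matrix

private lemma adj_entry_zero_of_kernel {n : ℕ} (A : Matrix (Fin n) (Fin n) ℝ)
    (w : Fin n → ℝ) (hw : w ≠ 0) (hAw : A *ᵥ w = 0) (i j : Fin n) (hwi : w i = 0) :
    A.adjugate i j = 0 := by
  rw [adjugate_apply, ← exists_mulVec_eq_zero_iff]
  refine ⟨w, hw, ?_⟩
  funext k
  rcases eq_or_ne k j with rfl | hk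
  · simp [mulVec, updateRow_apply, single_dotProduct, hwi]
  · have := congrFun hAw k
    simpa [mulVec, updateRow_apply, hk] using this

/-- A real symmetric `n×n` matrix `A` (`n ≥ 2`) has nullity 1 together with a kernel
vector all of whose entries are nonzero, if and only if `det A = 0` and `adj A`
has no zero entries. -/
theorem stmt_4 (n : ℕ) (hn : 2 ≤ n) (A : Matrix (Fin n) (Fin n) ℝ) (hA : A.IsSymm) :
    (Module.finrank ℝ (LinearMap.ker A.mulVecLin) = 1 ∧
        ∃ x : Fin n → ℝ, A *ᵥ x = 0 ∧ ∀ i, x i ≠ 0) ↔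
      (A.det = 0 ∧ ∀ i j : Fin n, A.adjugate i j ≠ 0) := by
  have i0 : Fin n := ⟨0, by omega⟩
  constructor
  · rintro ⟨hker, x, hAx, hx⟩
    have hx0 : x ≠ 0 := fun h => hx i0 (by simp [h])
    have hdet : A.det = 0 := exists_mulVec_eq_zero_iff.mp ⟨x, hx0, hAx⟩
    -- the kernel is the span of x
    have hspan : Submodule.span ℝ {x} = LinearMap.ker A.mulVecLin := by
      apply Submodule.eq_of_le_of_finrank_le
      · rw [Submodule.span_singleton_le_iff_mem, LinearMap.mem_ker, mulVecLin_apply]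
        exact hAx
      · rw [hker, finrank_span_singleton hx0]
    -- rows of A sum to zero with coefficients x
    have hrowsum : ∑ k, x k • A k = 0 := by
      funext j
      have h1 : (x ᵥ* A) j = 0 := by
        rw [← hA.eq, vecMul_transpose, hAx]; rfl
      simpa [vecMul, dotProduct] using h1
    -- some adjugate entry is nonzero
    have hW : Submodule.span ℝ (Set.range A) = LinearMap.range A.mulVecLin := by
      rw [range_mulVecLin, Matrix.col, hA.eq]
    have hcard : Module.finrank ℝ (Fin n → ℝ) = n := Module.finrank_fin_fun ℝ
    have hrank : Module.finrank ℝ (LinearMap.range A.mulVecLin) + 1 = n := by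
      have := LinearMap.finrank_range_add_finrank_ker A.mulVecLin
      rw [hker, hcard] at this
      exact this
    -- find a basis vector not in the row space
    have hex : ∃ i : Fin n, (Pi.single i 1 : Fin n → ℝ) ∉ LinearMap.range A.mulVecLin := by
      by_contra hcon
      push_neg at hcon
      have htop : LinearMap.range A.mulVecLin = ⊤ := by
        rw [eq_top_iff]
        intro v _
        have hv : v = ∑ i, v i • (Pi.single i 1 : Fin n → ℝ) := by
          funext k; simp [Pi.single_apply]
        rw [hv]
        exact Submodule.sum_mem _ fun i _ => Submodule.smul_mem _ _ (hcon i)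
      rw [htop] at hrank
      rw [finrank_top, hcard] at hrank
      omega
    obtain ⟨i1, hi1⟩ := hex
    have hadjne : ∃ i j, A.adjugate i j ≠ 0 := by
      refine ⟨i1, i0, ?_⟩
      set B := A.updateRow i0 (Pi.single i1 1) with hB
      -- rows of B span everything
      have hWle : Submodule.span ℝ (Set.range A) ≤ Submodule.span ℝ (Set.range B) := by
        rw [Submodule.span_le]
        rintro _ ⟨k, rfl⟩
        rcases eq_or_ne k i0 with rfl | hk
        · -- A k is a combination of the other rows
          have h2 : x k • A k = -∑ j ∈ Finset.univ.erase k, x j • A j := by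
            rw [← Finset.add_sum_erase _ _ (Finset.mem_univ k)] at hrowsum
            linear_combination (norm := module) hrowsum
          have h3 : x k • A k ∈ Submodule.span ℝ (Set.range B) := by
            rw [h2]
            refine Submodule.neg_mem _ (Submodule.sum_mem _ fun j hj => ?_)
            refine Submodule.smul_mem _ _ (Submodule.subset_span ⟨j, ?_⟩)
            rw [hB, updateRow_ne (Finset.ne_of_mem_erase hj)]
          have := Submodule.smul_mem _ (x k)⁻¹ h3
          rwa [smul_smul, inv_mul_cancel₀ (hx k), one_smul] at this
        · exact Submodule.subset_span ⟨k, by rw [hB, updateRow_ne hk]⟩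
      have hsingle : (Pi.single i1 1 : Fin n → ℝ) ∈ Submodule.span ℝ (Set.range B) :=
        Submodule.subset_span ⟨i0, by rw [hB, updateRow_self]⟩
      have hlt : LinearMap.range A.mulVecLin < Submodule.span ℝ (Set.range B) := by
        rw [← hW] at hi1 ⊢
        exact lt_of_le_of_ne hWle (fun h => hi1 (h ▸ hsingle))
      have htop : Submodule.span ℝ (Set.range B) = ⊤ := by
        apply Submodule.eq_top_of_finrank_eq
        rw [hcard]
        have h4 := Submodule.finrank_lt_finrank_of_lt hlt
        have h5 := Submodule.finrank_le (Submodule.span ℝ (Set.range B))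
        rw [hcard] at h5
        omega
      -- hence Bᵀ is surjective, so B has nonzero determinant
      have hsurj : Function.Surjective Bᵀ.mulVecLin := by
        rw [← LinearMap.range_eq_top, range_mulVecLin, Matrix.col, transpose_transpose, htop]
      have hsurj' : Function.Surjective Bᵀ.mulVec := by
        intro v
        obtain ⟨u, hu⟩ := hsurj v
        exact ⟨u, by rw [← mulVecLin_apply]; exact hu⟩
      have hunit : IsUnit Bᵀ := mulVec_surjective_iff_isUnit.mp hsurj'
      have hdetB : B.det ≠ 0 := by
        have := (isUnit_iff_isUnit_det _).mp hunit
        rw [det_transpose] at this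
        exact isUnit_iff_ne_zero.mp this
      rwa [adjugate_apply]
    refine ⟨hdet, ?_⟩
    obtain ⟨ia, ja, hija⟩ := hadjne
    -- columns of adjugate are kernel vectors
    have hmuladj : A * A.adjugate = 0 := by rw [mul_adjugate, hdet, zero_smul]
    have hadjmul : A.adjugate * A = 0 := by rw [adjugate_mul, hdet, zero_smul]
    have hcol : ∀ j, ∃ c : ℝ, (fun i => A.adjugate i j) = c • x := by
      intro j
      have hmem : (fun i => A.adjugate i j) ∈ LinearMap.ker A.mulVecLin := by
        rw [LinearMap.mem_ker, mulVecLin_apply]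
        funext k
        have := congrFun (congrFun hmuladj k) j
        simpa [mul_apply, mulVec, dotProduct] using this
      rw [← hspan, Submodule.mem_span_singleton] at hmem
      obtain ⟨c, hc⟩ := hmem
      exact ⟨c, hc.symm⟩
    have hrow : ∀ i, ∃ d : ℝ, A.adjugate i = d • x := by
      intro i
      have hmem : A.adjugate i ∈ LinearMap.ker A.mulVecLin := by
        rw [LinearMap.mem_ker, mulVecLin_apply]
        have hvm : A.adjugate i ᵥ* A = 0 := by
          funext k
          have := congrFun (congrFun hadjmul i) k
          simpa [mul_apply, vecMul, dotProduct] using this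
        calc A *ᵥ A.adjugate i = A.adjugate i ᵥ* Aᵀ := (vecMul_transpose _ _).symm
          _ = A.adjugate i ᵥ* A := by rw [hA.eq]
          _ = 0 := hvm
      rw [← hspan, Submodule.mem_span_singleton] at hmem
      obtain ⟨c, hc⟩ := hmem
      exact ⟨c, hc.symm⟩
    -- entries of column ja are all nonzero
    obtain ⟨c, hc⟩ := hcol ja
    have hcne : c ≠ 0 := by
      intro h
      rw [h] at hc
      have := congrFun hc ia
      simp at this
      exact hija this
    have hcolja : ∀ i, A.adjugate i ja ≠ 0 := by
      intro i
      have := congrFun hc i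
      simp only [Pi.smul_apply, smul_eq_mul] at this
      rw [this]
      exact mul_ne_zero hcne (hx i)
    intro i j
    obtain ⟨d, hd⟩ := hrow i
    have hdne : d ≠ 0 := by
      intro h
      rw [h] at hd
      exact hcolja i (by rw [hd]; simp)
    have := congrFun hd j
    simp only [Pi.smul_apply, smul_eq_mul] at this
    rw [this]
    exact mul_ne_zero hdne (hx j)
  · rintro ⟨hdet, hadj⟩
    have hmuladj : A * A.adjugate = 0 := by rw [mul_adjugate, hdet, zero_smul]
    -- the column i0 of the adjugate is a full kernel vector
    set x : Fin n → ℝ := fun i => A.adjugate i i0 with hxdef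
    have hAx : A *ᵥ x = 0 := by
      funext k
      have := congrFun (congrFun hmuladj k) i0
      simpa [mul_apply, mulVec, dotProduct, hxdef] using this
    have hx : ∀ i, x i ≠ 0 := fun i => hadj i i0
    have hx0 : x ≠ 0 := fun h => hx i0 (by simp [h])
    refine ⟨?_, x, hAx, hx⟩
    have hmemx : x ∈ LinearMap.ker A.mulVecLin := by
      rw [LinearMap.mem_ker, mulVecLin_apply]; exact hAx
    have hpos : 0 < Module.finrank ℝ (LinearMap.ker A.mulVecLin) := by
      rw [Module.finrank_pos_iff]
      exact ⟨⟨x, hmemx⟩, 0, fun h => hx0 (congrArg Subtype.val h)⟩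
    by_contra hne
    have h2 : 2 ≤ Module.finrank ℝ (LinearMap.ker A.mulVecLin) := by omega
    -- then there is a nonzero kernel vector vanishing at i0
    set K := LinearMap.ker A.mulVecLin with hK
    set φ : K →ₗ[ℝ] ℝ := (LinearMap.proj i0).comp K.subtype with hφ
    have hrk := LinearMap.finrank_range_add_finrank_ker φ
    have hr1 : Module.finrank ℝ (LinearMap.range φ) ≤ 1 := by
      have := Submodule.finrank_le (LinearMap.range φ)
      simpa using this
    have hkerφ : 0 < Module.finrank ℝ (LinearMap.ker φ) := by omega
    haveI : Nontrivial (LinearMap.ker φ) :=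
      Module.finrank_pos_iff (R := ℝ) (M := LinearMap.ker φ) |>.mp hkerφ
    obtain ⟨w, hwne⟩ := exists_ne (0 : LinearMap.ker φ)
    have hwvne : (w.1.1 : Fin n → ℝ) ≠ 0 := by
      intro h
      apply hwne
      apply Subtype.ext; apply Subtype.ext; exact h
    have hwker : A *ᵥ w.1.1 = 0 := by
      have hm : w.1.1 ∈ LinearMap.ker A.mulVecLin := w.1.2
      rwa [LinearMap.mem_ker, mulVecLin_apply] at hm
    have hwi0 : w.1.1 i0 = 0 := w.2
    exact hadj i0 i0 (adj_entry_zero_of_kernel A w.1.1 hwvne hwker i0 i0 hwi0)
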